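/- Let −1 ≤ a < b < 1 with a + b ≥ 0, let d ≥ 1, and set γ = (2 − a − b)/(b − a). Suppose γ² > d. If v_1, …, v_n are unit vectors in ℝ^d such that ⟨v_i, v_j⟩ ∈ {a, b} for all i ≠ j, then n ≤ d·(γ² − 1)/(γ² − d). -/

import Mathlib

open Matrix Finset

lemma inner_eq_dot {n : ℕ} (x y : EuclideanSpace ℝ (Fin n)) :
    (inner ℝ x y : ℝ) = (⇑x : Fin n → ℝ) ⬝ᵥ ⇑y := by
  simp [PiLp.inner_apply, dotProduct, RCLike.inner_apply, mul_comm]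

lemma sum_eig {n : ℕ} (A : Matrix (Fin n) (Fin n) ℝ) (hA : A.IsHermitian) :
    ∑ i, hA.eigenvalues i = A.trace := by
  classical
  have hsp := hA.spectral_theorem
  have hU : (star (hA.eigenvectorUnitary : Matrix (Fin n) (Fin n) ℝ)) *
      (hA.eigenvectorUnitary : Matrix (Fin n) (Fin n) ℝ) = 1 :=
    (Matrix.mem_unitaryGroup_iff').mp (hA.eigenvectorUnitary).2
  rw [Unitary.conjStarAlgAut_apply] at hsp
  conv_rhs => rw [hsp]
  rw [Matrix.trace_mul_cycle, hU, Matrix.one_mul, Matrix.trace_diagonal]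
  simp [RCLike.ofReal_real_eq_id]

lemma sum_eig_sq {n : ℕ} (A : Matrix (Fin n) (Fin n) ℝ) (hA : A.IsHermitian) :
    ∑ i, (hA.eigenvalues i)^2 = (A * A).trace := by
  classical
  set U : Matrix (Fin n) (Fin n) ℝ := (hA.eigenvectorUnitary : Matrix (Fin n) (Fin n) ℝ) with hUdef
  set D : Matrix (Fin n) (Fin n) ℝ := Matrix.diagonal (RCLike.ofReal ∘ hA.eigenvalues) with hDdef
  have hU : star U * U = 1 := (Matrix.mem_unitaryGroup_iff').mp (hA.eigenvectorUnitary).2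
  have hsp : A = U * D * star U := hA.spectral_theorem
  have h2 : A * A = U * (D * D) * star U := by
    rw [hsp]
    calc (U * D * star U) * (U * D * star U) = U * D * (star U * U) * D * star U := by
          simp only [Matrix.mul_assoc]
      _ = U * (D * D) * star U := by rw [hU]; simp only [Matrix.mul_one, Matrix.mul_assoc]
  rw [h2, Matrix.trace_mul_cycle, hU, Matrix.one_mul]
  rw [hDdef, Matrix.diagonal_mul_diagonal, Matrix.trace_diagonal]
  simp [RCLike.ofReal_real_eq_id, pow_two]

lemma card_nonzero_le {n : ℕ} (A : Matrix (Fin n) (Fin n) ℝ) (hA : A.IsHermitian)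
    (K : Submodule ℝ (EuclideanSpace ℝ (Fin n)))
    (hK : ∀ x ∈ K, A *ᵥ ⇑x = 0) :
    Fintype.card {i // hA.eigenvalues i ≠ 0} + Module.finrank ℝ K ≤ n := by
  classical
  have hAT : Aᵀ = A := hA
  have horthB := hA.eigenvectorBasis.orthonormal
  have hswap : ∀ y z : Fin n → ℝ, y ⬝ᵥ (A *ᵥ z) = (A *ᵥ y) ⬝ᵥ z := by
    intro y z
    rw [Matrix.dotProduct_mulVec]
    conv_lhs => rw [← hAT]
    rw [Matrix.vecMul_transpose]
  have hmem : ∀ i : Fin n, hA.eigenvalues i ≠ 0 → (hA.eigenvectorBasis i) ∈ Kᗮ := by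
    intro i hi
    rw [Submodule.mem_orthogonal]
    intro u hu
    have h0 : (⇑u : Fin n → ℝ) ⬝ᵥ (A *ᵥ ⇑(hA.eigenvectorBasis i)) = 0 := by
      rw [hswap, hK u hu]
      simp
    rw [hA.mulVec_eigenvectorBasis] at h0
    have h1 : (⇑u : Fin n → ℝ) ⬝ᵥ ⇑(hA.eigenvectorBasis i) = 0 := by
      rw [dotProduct_smul] at h0
      rcases mul_eq_zero.mp h0 with h | h
      · exact absurd h hi
      · exact h
    rw [inner_eq_dot]
    exact h1
  set f : {i // hA.eigenvalues i ≠ 0} → Kᗮ := fun i => ⟨hA.eigenvectorBasis i.1, hmem i.1 i.2⟩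
    with hf
  have horth : Orthonormal ℝ f := by
    rw [orthonormal_iff_ite]
    rw [orthonormal_iff_ite] at horthB
    intro i j
    have := horthB i.1 j.1
    rw [hf]
    simp only [Submodule.coe_inner]
    rw [this]
    by_cases hij : i = j
    · simp [hij]
    · have : i.1 ≠ j.1 := fun h => hij (Subtype.ext h)
      simp [hij, this]
  have hcard : Fintype.card {i // hA.eigenvalues i ≠ 0} ≤ Module.finrank ℝ Kᗮ :=
    horth.linearIndependent.fintype_card_le_finrank
  have hsum : Module.finrank ℝ K + Module.finrank ℝ Kᗮ
      = Module.finrank ℝ (EuclideanSpace ℝ (Fin n)) :=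
    Submodule.finrank_add_finrank_orthogonal K
  rw [finrank_euclideanSpace_fin] at hsum
  omega

set_option maxHeartbeats 2000000 in
lemma key {n : ℕ} (d : ℕ) (N : Matrix (Fin d) (Fin n) ℝ) (c g h : ℝ) (hc : 0 ≤ c) (hg : 0 ≤ g)
    (A : Matrix (Fin n) (Fin n) ℝ)
    (hAdef : A = Nᴴ * N - c • Matrix.of (fun _ _ => (1:ℝ)))
    (hdiag : ∀ i, A i i = g)
    (hoff : ∀ i j, i ≠ j → A i j = h ∨ A i j = -h) :
    (n:ℝ)^2 * g^2 ≤ (d:ℝ) * ((n:ℝ) * g^2 + (n:ℝ)*((n:ℝ)-1)*h^2) := by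
  classical
  have hG : (Nᴴ * N).PosSemidef := Matrix.posSemidef_conjTranspose_mul_self N
  have hsymm : ∀ i j, A i j = A j i := by
    intro i j
    rw [hAdef]
    simp only [Matrix.sub_apply, Matrix.mul_apply, Matrix.conjTranspose_apply,
      Matrix.smul_apply, Matrix.of_apply, star_trivial, smul_eq_mul]
    rw [Finset.sum_congr rfl (fun k _ => mul_comm _ _)]
  have hA : A.IsHermitian := by
    ext i j
    simp only [Matrix.conjTranspose_apply, star_trivial]
    exact hsymm j i
  have hmulA : ∀ y : Fin n → ℝ, (∑ k, y k) = 0 → A *ᵥ y = (Nᴴ * N) *ᵥ y := by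
    intro y hy
    rw [hAdef, Matrix.sub_mulVec]
    have hz : (c • Matrix.of (fun _ _ => (1:ℝ)) : Matrix (Fin n) (Fin n) ℝ) *ᵥ y = 0 := by
      funext i
      simp [Matrix.mulVec, dotProduct, ← Finset.mul_sum, hy]
    rw [hz, sub_zero]
  have hstar : ∀ y : Fin n → ℝ, star y = y := fun y => funext fun k => star_trivial _
  have hquad : ∀ y : Fin n → ℝ, (∑ k, y k) = 0 → 0 ≤ y ⬝ᵥ (A *ᵥ y) := by
    intro y hy
    rw [hmulA y hy]
    have := hG.dotProduct_mulVec_nonneg y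
    rwa [hstar] at this
  set lam := hA.eigenvalues with hlam
  have hC1 : ∀ i j, i ≠ j → lam i < 0 → lam j < 0 → False := by
    intro i j hij hi hj
    have hAu : A *ᵥ ⇑(hA.eigenvectorBasis i) = lam i • ⇑(hA.eigenvectorBasis i) :=
      hA.mulVec_eigenvectorBasis i
    have hAw : A *ᵥ ⇑(hA.eigenvectorBasis j) = lam j • ⇑(hA.eigenvectorBasis j) :=
      hA.mulVec_eigenvectorBasis j
    set u : Fin n → ℝ := ⇑(hA.eigenvectorBasis i) with hu
    set w : Fin n → ℝ := ⇑(hA.eigenvectorBasis j) with hw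
    have horthB := hA.eigenvectorBasis.orthonormal
    rw [orthonormal_iff_ite] at horthB
    have huu : u ⬝ᵥ u = 1 := by
      have := horthB i i; rw [inner_eq_dot] at this; simpa using this
    have hww : w ⬝ᵥ w = 1 := by
      have := horthB j j; rw [inner_eq_dot] at this; simpa using this
    have huw : u ⬝ᵥ w = 0 := by
      have := horthB i j; rw [inner_eq_dot] at this; simpa [hij] using this
    have hwu : w ⬝ᵥ u = 0 := by
      have := horthB j i; rw [inner_eq_dot] at this; simpa [hij.symm] using this
    by_cases hs : (∑ k, u k) = 0 ∧ (∑ k, w k) = 0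
    · have h0 := hquad u hs.1
      rw [hAu, dotProduct_smul, huu] at h0
      simp at h0
      exact absurd h0 (not_le.mpr hi)
    · set su := ∑ k, u k with hsu
      set sw := ∑ k, w k with hsw
      set z : Fin n → ℝ := sw • u - su • w with hz
      have hzsum : ∑ k, z k = 0 := by
        simp only [hz, Pi.sub_apply, Pi.smul_apply, smul_eq_mul]
        rw [Finset.sum_sub_distrib, ← Finset.mul_sum, ← Finset.mul_sum]
        ring
      have h0 := hquad z hzsum
      have hAz : A *ᵥ z = sw • (lam i • u) - su • (lam j • w) := by
        rw [hz, Matrix.mulVec_sub, Matrix.mulVec_smul, Matrix.mulVec_smul, hAu, hAw]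
      rw [hAz] at h0
      have hexp : z ⬝ᵥ (sw • (lam i • u) - su • (lam j • w))
          = sw^2 * lam i + su^2 * lam j := by
        simp only [hz, sub_dotProduct, dotProduct_sub, smul_dotProduct,
          dotProduct_smul, smul_eq_mul, huu, huw, hwu, hww]
        ring
      rw [hexp] at h0
      rcases not_and_or.mp hs with hne | hne
      · have : 0 < su^2 := by positivity
        nlinarith [sq_nonneg sw]
      · have : 0 < sw^2 := by positivity
        nlinarith [sq_nonneg su]
  set P : Finset (Fin n) := Finset.univ.filter (fun i => 0 < lam i) with hP
  set NZ : Finset (Fin n) := Finset.univ.filter (fun i => lam i ≠ 0) with hNZ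
  have hcardNZ : Fintype.card {i // hA.eigenvalues i ≠ 0} = NZ.card := by
    rw [hNZ, ← hlam]
    exact Fintype.card_subtype _
  set L1 : EuclideanSpace ℝ (Fin n) →ₗ[ℝ] (Fin d → ℝ) :=
    N.mulVecLin.comp (WithLp.linearEquiv 2 ℝ (Fin n → ℝ)).toLinearMap with hL1
  set Lsum : EuclideanSpace ℝ (Fin n) →ₗ[ℝ] ℝ :=
    { toFun := fun x => ∑ k, x k
      map_add' := by intro x y; simp [Finset.sum_add_distrib]
      map_smul' := by intro r x; simp [← Finset.mul_sum] } with hLsum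
  have hL1apply : ∀ x : EuclideanSpace ℝ (Fin n), L1 x = N *ᵥ ⇑x := by
    intro x; rfl
  have hLsumapply : ∀ x : EuclideanSpace ℝ (Fin n), Lsum x = ∑ k, x k := by
    intro x; rfl
  have hPcard : P.card ≤ d := by
    by_cases hex : ∃ i0, lam i0 < 0
    · obtain ⟨i0, hi0⟩ := hex
      set L := L1.prod Lsum with hL
      set K := LinearMap.ker L with hK
      have hKzero : ∀ x ∈ K, A *ᵥ ⇑x = 0 := by
        intro x hx
        have hx' : L x = 0 := LinearMap.mem_ker.mp hx
        rw [hL, LinearMap.prod_apply] at hx'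
        have h1 : N *ᵥ ⇑x = 0 := by
          have := congrArg Prod.fst hx'
          simpa [hL1apply] using this
        have h2 : (∑ k, (⇑x : Fin n → ℝ) k) = 0 := by
          have := congrArg Prod.snd hx'
          simpa [hLsumapply] using this
        rw [hmulA (⇑x : Fin n → ℝ) h2, ← Matrix.mulVec_mulVec, h1, Matrix.mulVec_zero]
      have hcnt := card_nonzero_le A hA K hKzero
      rw [hcardNZ] at hcnt
      rw [hK] at hcnt
      have hrn := L.finrank_range_add_finrank_ker
      rw [finrank_euclideanSpace_fin] at hrn
      have hrle : Module.finrank ℝ (LinearMap.range L) ≤ d + 1 := by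
        have h1 := Submodule.finrank_le (LinearMap.range L)
        simpa [Module.finrank_prod, Module.finrank_pi] using h1
      have hNZle : NZ.card ≤ d + 1 := by omega
      have hsub : P ⊆ NZ := by
        intro i hi
        rw [hP, Finset.mem_filter] at hi
        rw [hNZ, Finset.mem_filter]
        exact ⟨Finset.mem_univ _, ne_of_gt hi.2⟩
      have hssub : P ⊂ NZ := by
        rw [Finset.ssubset_iff_of_subset hsub]
        refine ⟨i0, ?_, ?_⟩
        · rw [hNZ, Finset.mem_filter]; exact ⟨Finset.mem_univ _, ne_of_lt hi0⟩
        · rw [hP, Finset.mem_filter]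
          push_neg
          intro _
          linarith
      have := Finset.card_lt_card hssub
      omega
    · push_neg at hex
      have hPSD : A.PosSemidef := hA.posSemidef_iff_eigenvalues_nonneg.mpr (fun i => hex i)
      set K := LinearMap.ker L1 with hK
      have hKzero : ∀ x ∈ K, A *ᵥ ⇑x = 0 := by
        intro x hx
        have h1 : N *ᵥ ⇑x = 0 := by
          have := LinearMap.mem_ker.mp hx
          rw [hL1apply] at this
          exact this
        have hGx : (Nᴴ * N) *ᵥ ⇑x = 0 := by
          rw [← Matrix.mulVec_mulVec, h1, Matrix.mulVec_zero]
        have hqle : (⇑x : Fin n → ℝ) ⬝ᵥ (A *ᵥ ⇑x) ≤ 0 := by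
          rw [hAdef, Matrix.sub_mulVec, dotProduct_sub, hGx, dotProduct_zero]
          have hJy : ((c • Matrix.of (fun _ _ => (1:ℝ)) : Matrix (Fin n) (Fin n) ℝ) *ᵥ ⇑x)
              = fun _ => c * ∑ k, (⇑x : Fin n → ℝ) k := by
            funext i
            simp [Matrix.mulVec, dotProduct, ← Finset.mul_sum]
          rw [hJy]
          have hd : (⇑x : Fin n → ℝ) ⬝ᵥ (fun _ => c * ∑ k, (⇑x : Fin n → ℝ) k)
              = (∑ k, (⇑x : Fin n → ℝ) k) * (c * ∑ k, (⇑x : Fin n → ℝ) k) := by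
            simp only [dotProduct]
            rw [← Finset.sum_mul]
          rw [hd]
          nlinarith [sq_nonneg (∑ k, (⇑x : Fin n → ℝ) k), hc, sq_nonneg ((∑ k, (⇑x : Fin n → ℝ) k) + 1)]
        have hqge : 0 ≤ (⇑x : Fin n → ℝ) ⬝ᵥ (A *ᵥ ⇑x) := by
          have := hPSD.dotProduct_mulVec_nonneg ⇑x
          rwa [hstar] at this
        have hq0 : star (⇑x : Fin n → ℝ) ⬝ᵥ (A *ᵥ ⇑x) = 0 := by
          rw [hstar]; linarith
        exact (hPSD.dotProduct_mulVec_zero_iff ⇑x).mp hq0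
      have hcnt := card_nonzero_le A hA K hKzero
      rw [hcardNZ] at hcnt
      rw [hK] at hcnt
      have hrn := L1.finrank_range_add_finrank_ker
      rw [finrank_euclideanSpace_fin] at hrn
      have hrle : Module.finrank ℝ (LinearMap.range L1) ≤ d := by
        have h1 := Submodule.finrank_le (LinearMap.range L1)
        simpa [Module.finrank_pi] using h1
      have hsub : P ⊆ NZ := by
        intro i hi
        rw [hP, Finset.mem_filter] at hi
        rw [hNZ, Finset.mem_filter]
        exact ⟨Finset.mem_univ _, ne_of_gt hi.2⟩
      have := Finset.card_le_card hsub
      omega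
  -- trace identities
  have htr1 : ∑ i, lam i = (n:ℝ) * g := by
    rw [hlam, sum_eig A hA]
    rw [Matrix.trace]
    simp only [Matrix.diag_apply, hdiag]
    rw [Finset.sum_const, Finset.card_univ, Fintype.card_fin, nsmul_eq_mul]
  have htr2 : ∑ i, (lam i)^2 = (n:ℝ) * g^2 + (n:ℝ)*((n:ℝ)-1)*h^2 := by
    rw [hlam, sum_eig_sq A hA]
    have hterm : ∀ i j, A i j * A j i = (if i = j then g^2 - h^2 else 0) + h^2 := by
      intro i j
      by_cases hij : i = j
      · subst hij
        simp [hdiag i]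
        ring
      · rw [← hsymm i j]
        rcases hoff i j hij with hv | hv <;> simp [hij, hv] <;> ring
    rw [Matrix.trace]
    simp only [Matrix.diag_apply, Matrix.mul_apply]
    have : ∑ i, ∑ j, A i j * A j i
        = ∑ i : Fin n, ∑ j : Fin n, ((if i = j then g^2 - h^2 else 0) + h^2) := by
      apply Finset.sum_congr rfl
      intro i _
      apply Finset.sum_congr rfl
      intro j _
      exact hterm i j
    rw [this]
    simp [Finset.sum_add_distrib, Finset.sum_ite_eq, Finset.card_univ]
    ring
  -- negatives
  set Neg : Finset (Fin n) := Finset.univ.filter (fun i => lam i < 0) with hNegdef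
  have hNegcard : Neg.card ≤ 1 := by
    by_contra hgt
    push_neg at hgt
    obtain ⟨i, hi, j, hj, hij⟩ := Finset.one_lt_card.mp hgt
    rw [hNegdef, Finset.mem_filter] at hi hj
    exact hC1 i j hij hi.2 hj.2
  set x : ℝ := -∑ i ∈ Neg, lam i with hxdef
  have hxnn : 0 ≤ x := by
    rw [hxdef, neg_nonneg]
    apply Finset.sum_nonpos
    intro i hi
    rw [hNegdef, Finset.mem_filter] at hi
    linarith [hi.2]
  have hNsq : ∑ i ∈ Neg, (lam i)^2 = x^2 := by
    rcases Finset.eq_empty_or_nonempty Neg with he | ⟨j0, hj0⟩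
    · rw [hxdef, he]; simp
    · have hsing : Neg = {j0} := by
        apply Finset.eq_singleton_iff_unique_mem.mpr
        exact ⟨hj0, fun y hy => Finset.card_le_one.mp hNegcard y hy j0 hj0⟩
      rw [hxdef, hsing]
      simp
  have hdisj : ∀ i, i ∈ P → i ∉ Neg := by
    intro i hi hneg
    rw [hP, Finset.mem_filter] at hi
    rw [hNegdef, Finset.mem_filter] at hneg
    linarith [hi.2, hneg.2]
  have hsplit : ∀ f : Fin n → ℝ, (∀ i, lam i = 0 → f i = 0) →
      ∑ i, f i = ∑ i ∈ P, f i + ∑ i ∈ Neg, f i := by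
    intro f hf
    rw [← Finset.sum_filter_add_sum_filter_not Finset.univ (fun i => 0 < lam i) f]
    rw [← hP]
    congr 1
    rw [← Finset.sum_filter_add_sum_filter_not (Finset.univ.filter (fun i => ¬ 0 < lam i))
      (fun i => lam i < 0) f]
    rw [Finset.filter_filter]
    have h1 : Finset.univ.filter (fun i => ¬ 0 < lam i ∧ lam i < 0) = Neg := by
      rw [hNegdef]
      ext i
      simp only [Finset.mem_filter, Finset.mem_univ, true_and]
      constructor
      · exact fun hh => hh.2
      · exact fun hh => ⟨not_lt.mpr (le_of_lt hh), hh⟩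
    have h2 : ∑ i ∈ (Finset.univ.filter (fun i => ¬ 0 < lam i)).filter
        (fun i => ¬ lam i < 0), f i = 0 := by
      apply Finset.sum_eq_zero
      intro i hi
      rw [Finset.mem_filter, Finset.mem_filter] at hi
      apply hf
      have := hi.1.2
      have := hi.2
      linarith [not_lt.mp hi.1.2, not_lt.mp hi.2]
    rw [h1, h2, add_zero]
  have hsplit1 := hsplit lam (fun i hi => hi)
  have hsplit2 := hsplit (fun i => (lam i)^2) (fun i hi => by simp [hi])
  have hPsum : ∑ i ∈ P, lam i = (n:ℝ) * g + x := by
    rw [hsplit1] at htr1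
    rw [hxdef]
    linarith
  have hPsq : ∑ i ∈ P, (lam i)^2 = (n:ℝ) * g^2 + (n:ℝ)*((n:ℝ)-1)*h^2 - x^2 := by
    rw [hsplit2] at htr2
    linarith [hNsq]
  have hCS : (∑ i ∈ P, lam i)^2 ≤ (P.card : ℝ) * ∑ i ∈ P, (lam i)^2 :=
    sq_sum_le_card_mul_sum_sq (s := P) (f := lam)
  have hPd : (P.card : ℝ) ≤ (d:ℝ) := by exact_mod_cast hPcard
  have hSnn : 0 ≤ ∑ i ∈ P, (lam i)^2 := Finset.sum_nonneg (fun i _ => sq_nonneg _)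
  rw [hPsum, hPsq] at hCS
  rw [hPsq] at hSnn
  have hstep : ((n:ℝ) * g + x)^2 ≤ (d:ℝ) * ((n:ℝ) * g^2 + (n:ℝ)*((n:ℝ)-1)*h^2 - x^2) :=
    le_trans hCS (mul_le_mul_of_nonneg_right hPd hSnn)
  have hn0 : (0:ℝ) ≤ (n:ℝ) := Nat.cast_nonneg n
  have hd0 : (0:ℝ) ≤ (d:ℝ) := Nat.cast_nonneg d
  nlinarith [mul_nonneg (mul_nonneg hn0 hg) hxnn, sq_nonneg x, mul_nonneg hd0 (sq_nonneg x)]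



/-- Theorem B: the bound for spherical two-distance sets in
`S^{d-1}` with `a + b ≥ 0`, where `γ = (2−a−b)/(b−a)` and `γ² > d`. -/
theorem stmt10 (d n : ℕ) (hd : 1 ≤ d)
    (a b : ℝ) (ha : -1 ≤ a) (hab : a < b) (hb : b < 1) (hsum : 0 ≤ a + b)
    (γ : ℝ) (hγ : γ = (2 - a - b) / (b - a)) (hγ2 : γ ^ 2 > (d : ℝ))
    (v : Fin n → EuclideanSpace ℝ (Fin d))
    (hunit : ∀ i, ‖v i‖ = 1)
    (hinner : ∀ i j, i ≠ j →
      (inner ℝ (v i) (v j) : ℝ) = a ∨ (inner ℝ (v i) (v j) : ℝ) = b) :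
    (n : ℝ) ≤ (d : ℝ) * (γ ^ 2 - 1) / (γ ^ 2 - (d : ℝ)) := by
  classical
  set c : ℝ := (a + b) / 2 with hcdef
  set g : ℝ := (2 - a - b) / 2 with hgdef
  set hh : ℝ := (b - a) / 2 with hhdef
  have hc : 0 ≤ c := by rw [hcdef]; linarith
  have hg : 0 ≤ g := by rw [hgdef]; linarith
  have hhpos : 0 < hh := by rw [hhdef]; linarith
  set N : Matrix (Fin d) (Fin n) ℝ := Matrix.of (fun k i => v i k) with hNdef
  set A : Matrix (Fin n) (Fin n) ℝ :=
    Nᴴ * N - c • Matrix.of (fun _ _ => (1:ℝ)) with hAdef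
  have hGram : ∀ i j, (Nᴴ * N) i j = (inner ℝ (v i) (v j) : ℝ) := by
    intro i j
    rw [Matrix.mul_apply, inner_eq_dot]
    simp [hNdef, Matrix.conjTranspose_apply, dotProduct]
  have hdiag : ∀ i, A i i = g := by
    intro i
    rw [hAdef]
    simp only [Matrix.sub_apply, Matrix.smul_apply, Matrix.of_apply, smul_eq_mul, mul_one]
    rw [hGram i i]
    have h1 : (inner ℝ (v i) (v i) : ℝ) = 1 := by
      rw [real_inner_self_eq_norm_sq, hunit i]; norm_num
    rw [h1, hcdef, hgdef]
    ring
  have hoff : ∀ i j, i ≠ j → A i j = hh ∨ A i j = -hh := by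
    intro i j hij
    rw [hAdef]
    simp only [Matrix.sub_apply, Matrix.smul_apply, Matrix.of_apply, smul_eq_mul, mul_one]
    rw [hGram i j]
    rcases hinner i j hij with hv | hv
    · right; rw [hv, hcdef, hhdef]; ring
    · left; rw [hv, hcdef, hhdef]; ring
  have K1 := key d N c g hh hc hg A hAdef hdiag hoff
  have hγg : g = γ * hh := by
    have hba : b - a ≠ 0 := ne_of_gt (by linarith)
    rw [hγ, hgdef, hhdef]
    field_simp
  have hd1 : (1:ℝ) ≤ (d:ℝ) := by exact_mod_cast hd
  rcases Nat.eq_zero_or_pos n with hn | hn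
  · subst hn
    simp only [Nat.cast_zero]
    apply div_nonneg
    · nlinarith
    · linarith
  · have hnpos : (0:ℝ) < n := by exact_mod_cast hn
    rw [le_div_iff₀ (by linarith : (0:ℝ) < γ^2 - (d:ℝ))]
    have hhh : (0:ℝ) < hh^2 := by positivity
    have e1 : (n:ℝ)^2 * g^2 = ((n:ℝ)^2 * γ^2) * hh^2 := by rw [hγg]; ring
    have e2 : (d:ℝ) * ((n:ℝ) * g^2 + (n:ℝ)*((n:ℝ)-1)*hh^2)
        = ((d:ℝ) * ((n:ℝ) * γ^2 + (n:ℝ)*((n:ℝ)-1))) * hh^2 := by rw [hγg]; ring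
    rw [e1, e2] at K1
    have h4 : (n:ℝ)^2 * γ^2 ≤ (d:ℝ) * ((n:ℝ) * γ^2 + (n:ℝ)*((n:ℝ)-1)) :=
      le_of_mul_le_mul_right K1 hhh
    have h5 : ((n:ℝ) * (γ^2 - (d:ℝ))) * (n:ℝ) ≤ ((d:ℝ) * (γ^2 - 1)) * (n:ℝ) := by
      nlinarith [h4]
    exact le_of_mul_le_mul_right h5 hnpos
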